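/- Let T be a string of length n, let τ be a positive integer with τ ≤ n/2, let X be a linearly ordered set, and let φ : Σ^τ → X be any function on length-τ strings. Write Φ(i) = φ(T[i .. i+τ−1]) for i ∈ [1 .. n−τ+1], and let Q = {i ∈ [1 .. n−τ+1] : per(T[i .. i+τ−1]) ≤ τ/3}. Define A = {i ∈ [1 .. n−2τ+1] : the set {j ∈ [i .. i+τ] : j ∉ Q} is nonempty and min{Φ(j) : j ∈ [i .. i+τ], j ∉ Q} ∈ {Φ(i), Φ(i+τ)}}. Then A is a τ-synchronizing set of T, i.e.: (consistency) if T[i .. i+2τ−1] = T[j .. j+2τ−1] then i ∈ A if and only if j ∈ A; and (density) for every i ∈ [1 .. n−3τ+2], A ∩ [i .. i+τ−1] = ∅ if and only if per(T[i .. i+3τ−2]) ≤ τ/3. -/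
import Mathlib


/-- A string of length `n` is modeled as a function `S : ℕ → α`, read at the
1-indexed positions `1, …, n`.  A positive integer `p ≤ n` is a *period* of `S`
if `S[i] = S[i+p]` holds for all `1 ≤ i ≤ n - p`. -/
def IsPeriod {α : Type*} (S : ℕ → α) (n p : ℕ) : Prop :=
  1 ≤ p ∧ p ≤ n ∧ ∀ i, 1 ≤ i → i + p ≤ n → S i = S (i + p)

/-- `per(S)`: the minimal period of the length-`n` string `S`. -/
noncomputable def minPer {α : Type*} (S : ℕ → α) (n : ℕ) : ℕ :=
  sInf {p | IsPeriod S n p}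

/-- The length-`τ` substring `T[i .. i+τ-1]` of `T`, as an element of `Σ^τ`. -/
def window {α : Type*} (T : ℕ → α) (τ i : ℕ) : Fin τ → α :=
  fun t => T (i + t.val)

/-- `per(T[i .. i+τ-1])`, the minimal period of the length-`τ` window starting at `i`. -/
noncomputable def winPer {α : Type*} (T : ℕ → α) (τ i : ℕ) : ℕ :=
  minPer (fun t => T (i + t - 1)) τ

section Helpers
variable {α : Type*}

/-- Period `p` on the (1-indexed, inclusive) segment `[a, b]`. -/
def HasPer (S : ℕ → α) (a b p : ℕ) : Prop :=
  ∀ t, a ≤ t → t + p ≤ b → S t = S (t + p)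

lemma hasPer_mono {S : ℕ → α} {a b a' b' p : ℕ} (h : HasPer S a b p)
    (ha : a ≤ a') (hb : b' ≤ b) : HasPer S a' b' p :=
  fun t ht htp => h t (ha.trans ht) (htp.trans hb)

lemma hasPer_rep {S : ℕ → α} {a b g : ℕ} (h : HasPer S a b g) :
    ∀ k s, a ≤ s → s + g * k ≤ b → S s = S (s + g * k) := by
  intro k
  induction k with
  | zero => intro s _ _; simp
  | succ k ih =>
    intro s has hsb
    have hmul : g * (k + 1) = g * k + g := Nat.mul_succ g k
    rw [hmul] at hsb ⊢
    have h1 : S s = S (s + g) := h s has (by omega)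
    rw [h1]
    have h2 := ih (s + g) (by omega) (by omega)
    rwa [show s + g + g * k = s + (g * k + g) from by omega] at h2

lemma hasPer_eq_of_dvd {S : ℕ → α} {a b g s t : ℕ} (h : HasPer S a b g)
    (has : a ≤ s) (htb : t ≤ b) (hst : s ≤ t) (hdvd : g ∣ (t - s)) : S s = S t := by
  obtain ⟨k, hk⟩ := hdvd
  have ht : t = s + g * k := by omega
  rw [ht]
  exact hasPer_rep h k s has (by omega)

/-- Fine and Wilf (weak form): ordered version, by induction. -/
lemma fine_wilf_aux {S : ℕ → α} : ∀ (n p q a b : ℕ), p + q ≤ n → 1 ≤ p → p ≤ q →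
    HasPer S a b p → HasPer S a b q → a + p + q ≤ b + 1 →
    HasPer S a b (Nat.gcd p q) := by
  intro n
  induction n with
  | zero => intro p q a b hn hp _ _ _ _; exact absurd hn (by omega)
  | succ n ih =>
    intro p q a b hn hp hpq hP hQ hlen
    rcases eq_or_lt_of_le hpq with heq | hlt
    · subst heq
      rw [Nat.gcd_self]
      exact hP
    · -- p < q
      have hpb : p ≤ b := by omega
      have hP' : HasPer S a (b - p) p := fun t ht htp => hP t ht (by omega)
      have hQ' : HasPer S a (b - p) (q - p) := by
        intro t ht htp
        have h1 : S (t + (q - p)) = S (t + q) := by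
          have := hP (t + (q - p)) (by omega) (by omega)
          rwa [show t + (q - p) + p = t + q from by omega] at this
        rw [h1]
        exact hQ t ht (by omega)
      have hG : HasPer S a (b - p) (Nat.gcd p (q - p)) := by
        rcases le_total p (q - p) with hle | hle
        · exact ih p (q - p) a (b - p) (by omega) hp hle hP' hQ' (by omega)
        · have := ih (q - p) p a (b - p) (by omega) (by omega) hle hQ' hP' (by omega)
          rwa [Nat.gcd_comm] at this
      have hgd : Nat.gcd p q = Nat.gcd p (q - p) := (Nat.gcd_sub_self_right hpq).symm
      rw [hgd]
      set g := Nat.gcd p (q - p) with hgdef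
      have hgq : g ∣ (q - p) := Nat.gcd_dvd_right _ _
      have hgp : g ∣ p := Nat.gcd_dvd_left _ _
      have hgle : g ≤ q - p := Nat.le_of_dvd (by omega) hgq
      have hg1 : 1 ≤ g := Nat.gcd_pos_of_pos_left _ (by omega)
      intro t ht htg
      by_cases hc : t + g ≤ b - p
      · exact hG t ht hc
      · have htp : a + p ≤ t := by omega
        have e1 : S (t - p) = S t := by
          have := hP (t - p) (by omega) (by omega)
          rwa [show t - p + p = t from by omega] at this
        have e2 : S (t - p) = S (t - p + g) := hG (t - p) (by omega) (by omega)
        have e3 : S (t - p + g) = S (t + g) := by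
          have := hP (t - p + g) (by omega) (by omega)
          rwa [show t - p + g + p = t + g from by omega] at this
        rw [← e1, e2, e3]

lemma fine_wilf {S : ℕ → α} {p q a b : ℕ} (hp : 1 ≤ p) (hq : 1 ≤ q)
    (hP : HasPer S a b p) (hQ : HasPer S a b q) (hlen : a + p + q ≤ b + 1) :
    HasPer S a b (Nat.gcd p q) := by
  rcases le_total p q with h | h
  · exact fine_wilf_aux (p + q) p q a b le_rfl hp h hP hQ hlen
  · have := fine_wilf_aux (q + p) q p a b le_rfl hq h hQ hP (by omega)
    rwa [Nat.gcd_comm] at this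

lemma isPeriod_minPer {S : ℕ → α} {n : ℕ} (hn : 1 ≤ n) : IsPeriod S n (minPer S n) := by
  have hne : (n : ℕ) ∈ {p | IsPeriod S n p} :=
    ⟨hn, le_rfl, fun i hi hin => absurd hin (by omega)⟩
  exact Nat.sInf_mem ⟨n, hne⟩

lemma minPer_le {S : ℕ → α} {n p : ℕ} (h : IsPeriod S n p) : minPer S n ≤ p :=
  Nat.sInf_le h

lemma isPeriod_congr {S S' : ℕ → α} {n p : ℕ} (h : ∀ t, 1 ≤ t → t ≤ n → S t = S' t) :
    IsPeriod S n p → IsPeriod S' n p := by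
  rintro ⟨h1, h2, h3⟩
  refine ⟨h1, h2, fun i hi hip => ?_⟩
  rw [← h i hi (by omega), ← h (i + p) (by omega) (by omega)]
  exact h3 i hi hip

lemma minPer_congr {S S' : ℕ → α} {n : ℕ} (h : ∀ t, 1 ≤ t → t ≤ n → S t = S' t) :
    minPer S n = minPer S' n := by
  unfold minPer
  congr 1
  ext p
  exact ⟨isPeriod_congr h, isPeriod_congr (fun t h1 h2 => (h t h1 h2).symm)⟩

lemma isPeriod_shift_iff {S : ℕ → α} {a m p : ℕ} (ha : 1 ≤ a) :
    IsPeriod (fun t => S (a + t - 1)) m p ↔ (1 ≤ p ∧ p ≤ m ∧ HasPer S a (a + m - 1) p) := by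
  constructor
  · rintro ⟨h1, h2, h3⟩
    refine ⟨h1, h2, fun t ht htp => ?_⟩
    have h : S (a + (t - a + 1) - 1) = S (a + (t - a + 1 + p) - 1) :=
      h3 (t - a + 1) (by omega) (by omega)
    rwa [show a + (t - a + 1) - 1 = t from by omega,
         show a + (t - a + 1 + p) - 1 = t + p from by omega] at h
  · rintro ⟨h1, h2, h3⟩
    refine ⟨h1, h2, fun i hi hip => ?_⟩
    show S (a + i - 1) = S (a + (i + p) - 1)
    have h := h3 (a + i - 1) (by omega) (by omega)
    rwa [show a + i - 1 + p = a + (i + p) - 1 from by omega] at h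

/-- Windows of length `τ` at positions `a` and `a+1` with minimal period `≤ τ/3`
have equal minimal periods. -/
lemma minPer_window_step {S : ℕ → α} {τ a : ℕ} (hτ : 3 ≤ τ) (ha : 1 ≤ a)
    (hpB : minPer (fun t => S (a + t - 1)) τ ≤ τ / 3)
    (hqB : minPer (fun t => S (a + 1 + t - 1)) τ ≤ τ / 3) :
    minPer (fun t => S (a + 1 + t - 1)) τ = minPer (fun t => S (a + t - 1)) τ := by
  set p := minPer (fun t => S (a + t - 1)) τ with hpdef
  set q := minPer (fun t => S (a + 1 + t - 1)) τ with hqdef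
  obtain ⟨hp1, hp2, hp3⟩ := (isPeriod_shift_iff ha).mp (isPeriod_minPer (by omega) :
    IsPeriod (fun t => S (a + t - 1)) τ p)
  obtain ⟨hq1, hq2, hq3⟩ := (isPeriod_shift_iff (by omega : 1 ≤ a + 1)).mp
    (isPeriod_minPer (by omega) : IsPeriod (fun t => S (a + 1 + t - 1)) τ q)
  -- hp3 : HasPer S a (a + τ - 1) p ; hq3 : HasPer S (a+1) (a + 1 + τ - 1) q
  have hq3' : HasPer S (a + 1) (a + τ) q := by
    rwa [show a + 1 + τ - 1 = a + τ from by omega] at hq3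
  -- the overlap [a+1, a+τ-1] has length τ-1 and both periods
  have hoP : HasPer S (a + 1) (a + τ - 1) p := hasPer_mono hp3 (by omega) le_rfl
  have hoQ : HasPer S (a + 1) (a + τ - 1) q := hasPer_mono hq3' le_rfl (by omega)
  have hov : HasPer S (a + 1) (a + τ - 1) (Nat.gcd p q) :=
    fine_wilf hp1 hq1 hoP hoQ (by omega)
  set g := Nat.gcd p q with hgdef
  have hgp : g ∣ p := Nat.gcd_dvd_left _ _
  have hgq : g ∣ q := Nat.gcd_dvd_right _ _
  have hg1 : 1 ≤ g := Nat.gcd_pos_of_pos_left _ (by omega)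
  have hgp' : g ≤ p := Nat.le_of_dvd (by omega) hgp
  have hgq' : g ≤ q := Nat.le_of_dvd (by omega) hgq
  -- window a+1 has period g
  have hWq : HasPer S (a + 1) (a + τ) g := by
    intro t ht htg
    by_cases hc : t + g ≤ a + τ - 1
    · exact hov t ht hc
    · have hteq : t + g = a + τ := by omega
      have h1 : S (a + τ - q) = S (a + τ) := by
        have := hq3' (a + τ - q) (by omega) (by omega)
        rwa [show a + τ - q + q = a + τ from by omega] at this
      have h2 : S (a + τ - q) = S t := by
        apply hasPer_eq_of_dvd hov (by omega) (by omega) (by omega)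
        rw [show t - (a + τ - q) = q - g from by omega]
        exact Nat.dvd_sub hgq dvd_rfl
      rw [show t + g = a + τ from hteq, ← h1, ← h2]
  -- window a has period g
  have hWp : HasPer S a (a + τ - 1) g := by
    intro t ht htg
    by_cases hc : a + 1 ≤ t
    · exact hov t hc htg
    · have hta : t = a := by omega
      subst hta
      have h1 : S t = S (t + p) := hp3 t le_rfl (by omega)
      have h2 : S (t + p) = S (t + g) := by
        apply (hasPer_eq_of_dvd hov (by omega) (by omega) (by omega) ?_).symm
        rw [show t + p - (t + g) = p - g from by omega]
        exact Nat.dvd_sub hgp dvd_rfl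
      rw [h1, h2]
  -- minimality on both sides
  have hq_le : q ≤ g := by
    apply minPer_le
    apply (isPeriod_shift_iff (by omega : 1 ≤ a + 1)).mpr
    refine ⟨hg1, by omega, ?_⟩
    rwa [show a + 1 + τ - 1 = a + τ from by omega]
  have hp_le : p ≤ g := by
    apply minPer_le
    exact (isPeriod_shift_iff ha).mpr ⟨hg1, by omega, hWp⟩
  omega

/-- Gluing: if every length-`τ` window of `S[1..L]` has minimal period `≤ τ/3`,
then so does the whole string. -/
lemma glue {S : ℕ → α} {τ L : ℕ} (hτ : 3 ≤ τ) (hL : τ ≤ L)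
    (h : ∀ a, 1 ≤ a → a + τ ≤ L + 1 → minPer (fun t => S (a + t - 1)) τ ≤ τ / 3) :
    minPer S L ≤ τ / 3 := by
  have hall : ∀ d, 1 + d + τ ≤ L + 1 →
      minPer (fun t => S (1 + d + t - 1)) τ = minPer (fun t => S (1 + t - 1)) τ := by
    intro d
    induction d with
    | zero => intro _; rfl
    | succ d ih =>
      intro hd
      have step := minPer_window_step (S := S) hτ (by omega : 1 ≤ 1 + d)
        (h (1 + d) (by omega) (by omega)) ?_
      · rw [show 1 + (d + 1) = 1 + d + 1 from by omega, step]
        exact ih (by omega)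
      · rw [show 1 + d + 1 = 1 + (d + 1) from by omega]
        exact h (1 + (d + 1)) (by omega) (by omega)
  set p := minPer (fun t => S (1 + t - 1)) τ with hpdef
  have hpB : p ≤ τ / 3 := h 1 le_rfl (by omega)
  obtain ⟨hp1, hp2, hp3⟩ := (isPeriod_shift_iff le_rfl).mp
    (isPeriod_minPer (by omega) : IsPeriod (fun t => S (1 + t - 1)) τ p)
  -- hp3 : HasPer S 1 (1 + τ - 1) p
  -- every window has period p
  have hwin : ∀ a, 1 ≤ a → a + τ ≤ L + 1 → HasPer S a (a + τ - 1) p := by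
    intro a h1 h2
    have heq : minPer (fun t => S (a + t - 1)) τ = p := by
      have := hall (a - 1) (by omega)
      rwa [show 1 + (a - 1) = a from by omega] at this
    have := (isPeriod_shift_iff h1).mp
      (isPeriod_minPer (by omega) : IsPeriod (fun t => S (a + t - 1)) τ
        (minPer (fun t => S (a + t - 1)) τ))
    rw [heq] at this
    exact this.2.2
  -- glue
  have hglue : HasPer S 1 L p := by
    intro t ht htp
    rcases le_or_gt (t + τ) (L + 1) with hc | hc
    · exact hwin t ht hc t le_rfl (by omega)
    · exact hwin (L - τ + 1) (by omega) (by omega) t (by omega) (by omega)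
  calc minPer S L ≤ p := minPer_le ⟨hp1, by omega, fun i hi hip => hglue i hi hip⟩
    _ ≤ τ / 3 := hpB

end Helpers

/-- The set `A` defined from an arbitrary mapping `φ : Σ^τ → X` by local minima of
`Φ(i) = φ(T[i .. i+τ-1])` over positions outside the highly-periodic set `Q` is always a
`τ`-synchronizing set of `T`: it satisfies both the consistency and the density conditions. -/
theorem local_minima_give_synchronizing_set {α X : Type*} [LinearOrder X]
    (T : ℕ → α) (n τ : ℕ) (hτ : 1 ≤ τ) (hτn : 2 * τ ≤ n)
    (φ : (Fin τ → α) → X)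
    (Q A : Set ℕ)
    (hQ : Q = {i | 1 ≤ i ∧ i + τ ≤ n + 1 ∧ winPer T τ i ≤ τ / 3})
    (hA : A = {i | 1 ≤ i ∧ i + 2 * τ ≤ n + 1 ∧
      ∃ j₀ ∈ Set.Icc i (i + τ), j₀ ∉ Q ∧
        (∀ j ∈ Set.Icc i (i + τ), j ∉ Q → φ (window T τ j₀) ≤ φ (window T τ j)) ∧
        (φ (window T τ j₀) = φ (window T τ i) ∨
          φ (window T τ j₀) = φ (window T τ (i + τ)))}) :
    -- consistency
    (∀ i j, 1 ≤ i → i + 2 * τ ≤ n + 1 → 1 ≤ j → j + 2 * τ ≤ n + 1 →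
      (∀ t, 1 ≤ t → t ≤ 2 * τ → T (i + t - 1) = T (j + t - 1)) →
      (i ∈ A ↔ j ∈ A)) ∧
    -- density
    (∀ i, 1 ≤ i → i + 3 * τ ≤ n + 2 →
      (A ∩ Set.Icc i (i + τ - 1) = ∅ ↔
        minPer (fun t => T (i + t - 1)) (3 * τ - 1) ≤ τ / 3)) := by
  classical
  constructor
  · -- consistency
    have key : ∀ i j, 1 ≤ i → i + 2 * τ ≤ n + 1 → 1 ≤ j → j + 2 * τ ≤ n + 1 →
        (∀ d, d < 2 * τ → T (i + d) = T (j + d)) → i ∈ A → j ∈ A := by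
      intro i j hi hin hj hjn h hiA
      have hwin : ∀ k, i ≤ k → k ≤ i + τ → window T τ k = window T τ (k - i + j) := by
        intro k h1 h2
        funext t
        have ht := t.isLt
        show T (k + t.val) = T (k - i + j + t.val)
        rw [show k + t.val = i + (k - i + t.val) from by omega,
            show k - i + j + t.val = j + (k - i + t.val) from by omega]
        exact h _ (by omega)
      have hwp : ∀ k, i ≤ k → k ≤ i + τ → winPer T τ k = winPer T τ (k - i + j) := by
        intro k h1 h2
        unfold winPer
        apply minPer_congr
        intro t ht1 ht2
        show T (k + t - 1) = T (k - i + j + t - 1)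
        rw [show k + t - 1 = i + (k - i + t - 1) from by omega,
            show k - i + j + t - 1 = j + (k - i + t - 1) from by omega]
        exact h _ (by omega)
      have hQiff : ∀ k, i ≤ k → k ≤ i + τ → (k ∈ Q ↔ k - i + j ∈ Q) := by
        intro k h1 h2
        simp only [hQ, Set.mem_setOf_eq]
        constructor
        · rintro ⟨-, -, h3⟩; exact ⟨by omega, by omega, by rwa [← hwp k h1 h2]⟩
        · rintro ⟨-, -, h3⟩; exact ⟨by omega, by omega, by rwa [hwp k h1 h2]⟩
      rw [hA] at hiA ⊢
      obtain ⟨-, -, j₀, hj₀mem, hj₀Q, hmin, hend⟩ := hiA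
      rw [Set.mem_Icc] at hj₀mem
      refine ⟨hj, hjn, j₀ - i + j, Set.mem_Icc.mpr (by omega), ?_, ?_, ?_⟩
      · intro hc
        exact hj₀Q ((hQiff j₀ hj₀mem.1 hj₀mem.2).mpr hc)
      · intro m hm hmQ
        rw [Set.mem_Icc] at hm
        have hm' : m - j + i ∈ Set.Icc i (i + τ) := Set.mem_Icc.mpr (by omega)
        have hmQ' : m - j + i ∉ Q := by
          intro hc
          apply hmQ
          have := (hQiff (m - j + i) (by omega) (by omega)).mp hc
          rwa [show m - j + i - i + j = m from by omega] at this
        have hle := hmin (m - j + i) hm' hmQ'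
        rw [hwin j₀ hj₀mem.1 hj₀mem.2] at hle
        have hw := hwin (m - j + i) (by omega) (by omega)
        rw [show m - j + i - i + j = m from by omega] at hw
        rwa [hw] at hle
      · rcases hend with he | he
        · left
          rw [hwin j₀ hj₀mem.1 hj₀mem.2] at he
          have hwi := hwin i le_rfl (by omega)
          rw [show i - i + j = j from by omega] at hwi
          rwa [hwi] at he
        · right
          rw [hwin j₀ hj₀mem.1 hj₀mem.2] at he
          have hwi := hwin (i + τ) (by omega) le_rfl
          rw [show i + τ - i + j = j + τ from by omega] at hwi
          rwa [hwi] at he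
    intro i j hi hin hj hjn h
    have h1 : ∀ d, d < 2 * τ → T (i + d) = T (j + d) := by
      intro d hd
      have := h (d + 1) (by omega) (by omega)
      rwa [show i + (d + 1) - 1 = i + d from by omega,
           show j + (d + 1) - 1 = j + d from by omega] at this
    exact ⟨key i j hi hin hj hjn h1,
      key j i hj hjn hi hin (fun d hd => (h1 d hd).symm)⟩
  · -- density
    intro i hi hin
    constructor
    · intro hempty
      have hnoA : ∀ k, k ∈ A → ¬ (i ≤ k ∧ k ≤ i + τ - 1) := by
        intro k hk hkI
        exact Set.eq_empty_iff_forall_notMem.mp hempty k ⟨hk, Set.mem_Icc.mpr hkI⟩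
      -- all windows in [i, i+2τ-1] are highly periodic
      have hallQ : ∀ j, i ≤ j → j ≤ i + 2 * τ - 1 → winPer T τ j ≤ τ / 3 := by
        intro j hj1 hj2
        by_contra hjw
        have hjQ : j ∉ Q := fun hc => by rw [hQ] at hc; exact hjw hc.2.2
        obtain ⟨j₀, hj₀F, hj₀min⟩ := Finset.exists_min_image
          ((Finset.Icc i (i + 2 * τ - 1)).filter (fun m => m ∉ Q))
          (fun m => φ (window T τ m))
          ⟨j, Finset.mem_filter.mpr ⟨Finset.mem_Icc.mpr ⟨hj1, hj2⟩, hjQ⟩⟩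
        rw [Finset.mem_filter, Finset.mem_Icc] at hj₀F
        obtain ⟨⟨hj₀1, hj₀2⟩, hj₀Q⟩ := hj₀F
        have hminF : ∀ m, i ≤ m → m ≤ i + 2 * τ - 1 → m ∉ Q →
            φ (window T τ j₀) ≤ φ (window T τ m) := by
          intro m h1 h2 h3
          exact hj₀min m (Finset.mem_filter.mpr ⟨Finset.mem_Icc.mpr ⟨h1, h2⟩, h3⟩)
        rcases le_or_gt j₀ (i + τ - 1) with hc | hc
        · apply hnoA j₀ ?_ ⟨hj₀1, hc⟩
          rw [hA]
          refine ⟨by omega, by omega, j₀, Set.mem_Icc.mpr (by omega), hj₀Q, ?_, Or.inl rfl⟩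
          intro m hm hmQ
          rw [Set.mem_Icc] at hm
          exact hminF m (by omega) (by omega) hmQ
        · apply hnoA (j₀ - τ) ?_ ⟨by omega, by omega⟩
          rw [hA]
          refine ⟨by omega, by omega, j₀, Set.mem_Icc.mpr (by omega), hj₀Q, ?_, Or.inr ?_⟩
          · intro m hm hmQ
            rw [Set.mem_Icc] at hm
            exact hminF m (by omega) (by omega) hmQ
          · rw [show j₀ - τ + τ = j₀ from by omega]
      -- τ ≥ 3
      have hwpos : 1 ≤ winPer T τ i :=
        (isPeriod_minPer hτ : IsPeriod (fun t => T (i + t - 1)) τ _).1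
      have hτ3 : 3 ≤ τ := by
        have := hallQ i le_rfl (by omega)
        omega
      -- glue
      refine glue hτ3 (by omega) ?_
      intro a ha1 ha2
      have heq : minPer (fun t => T (i + (a + t - 1) - 1)) τ = winPer T τ (i + a - 1) := by
        apply minPer_congr
        intro t ht1 ht2
        show T (i + (a + t - 1) - 1) = T (i + a - 1 + t - 1)
        rw [show i + (a + t - 1) - 1 = i + a - 1 + t - 1 from by omega]
      show minPer (fun t => T (i + (a + t - 1) - 1)) τ ≤ τ / 3
      rw [heq]
      exact hallQ (i + a - 1) (by omega) (by omega)
    · intro hper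
      apply Set.eq_empty_iff_forall_notMem.mpr
      rintro k ⟨hkA, hkI⟩
      rw [Set.mem_Icc] at hkI
      rw [hA] at hkA
      obtain ⟨hk1, hk2, j₀, hj₀mem, hj₀Q, -, -⟩ := hkA
      rw [Set.mem_Icc] at hj₀mem
      apply hj₀Q
      rw [hQ]
      refine ⟨by omega, by omega, ?_⟩
      set p := minPer (fun t => T (i + t - 1)) (3 * τ - 1) with hpdef
      obtain ⟨hp1, hp2, hp3⟩ := (isPeriod_shift_iff hi).mp
        (isPeriod_minPer (by omega) : IsPeriod (fun t => T (i + t - 1)) (3 * τ - 1) p)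
      -- hp3 : HasPer T i (i + (3*τ-1) - 1) p
      have hsub : HasPer T j₀ (j₀ + τ - 1) p := hasPer_mono hp3 (by omega) (by omega)
      have hP : IsPeriod (fun t => T (j₀ + t - 1)) τ p :=
        (isPeriod_shift_iff (by omega)).mpr ⟨hp1, by omega, hsub⟩
      calc winPer T τ j₀ ≤ p := minPer_le hP
        _ ≤ τ / 3 := hper
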